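/- Let κ < 0, λ > 0 and let n ≥ 1 be an integer. If u is an S⁺ₙ-solution of problem (P) for parameters (κ, λ), then λ > n²π². -/

import Mathlib

open Set Real Filter Topology

noncomputable section

/-- `u` is twice continuously differentiable on `[a,b]`, satisfies
`1 + κ (u')² > 0` and the ODE `-u'' = λ u (1 + κ (u')²)^(3/2)` on `[a,b]`. -/
def SolODE (κ lam : ℝ) (u : ℝ → ℝ) (a b : ℝ) : Prop :=
  (∀ x ∈ Set.Icc a b, DifferentiableAt ℝ u x) ∧
  (∀ x ∈ Set.Icc a b, DifferentiableAt ℝ (deriv u) x) ∧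
  ContinuousOn (deriv (deriv u)) (Set.Icc a b) ∧
  (∀ x ∈ Set.Icc a b, 0 < 1 + κ * (deriv u x) ^ 2) ∧
  (∀ x ∈ Set.Icc a b,
    -(deriv (deriv u) x) = lam * u x * (1 + κ * (deriv u x) ^ 2) ^ ((3 : ℝ) / 2))

/-- `u` is a solution of problem (P) on `[0,1]` with Dirichlet boundary conditions. -/
def SolP (κ lam : ℝ) (u : ℝ → ℝ) : Prop :=
  SolODE κ lam u 0 1 ∧ u 0 = 0 ∧ u 1 = 0

/-- `u` is an `S⁺ₙ`-solution of problem (P): a nontrivial solution with exactly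
`n - 1` zeros in `(0,1)`, all zeros in `[0,1]` simple, and positive near `0`. -/
def SPlus (κ lam : ℝ) (n : ℕ) (u : ℝ → ℝ) : Prop :=
  SolP κ lam u ∧
  (∃ x ∈ Set.Icc (0 : ℝ) 1, u x ≠ 0) ∧
  {x ∈ Set.Ioo (0 : ℝ) 1 | u x = 0}.ncard = n - 1 ∧
  (∀ τ ∈ Set.Icc (0 : ℝ) 1, u τ = 0 → deriv u τ ≠ 0) ∧
  (∃ δ > 0, ∀ x ∈ Set.Ioo (0 : ℝ) δ, 0 < u x)

/-- The constant `B = ∫₀¹ dθ/√(θ⁻⁴ - 1)`. -/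
def Bconst : ℝ := ∫ θ in (0 : ℝ)..1, 1 / Real.sqrt ((θ ^ 4)⁻¹ - 1)

/-- The sup-norm of `u` over `[0,1]`. -/
def supNorm (u : ℝ → ℝ) : ℝ := sSup ((fun x => |u x|) '' Set.Icc (0 : ℝ) 1)

/-- The time map `J(λ, ξ) = √(-κ) ∫₀¹ ξ/√(1 - (1 - λκξ²(1-θ²)/2)⁻²) dθ`. -/
def Jmap (κ lam ξ : ℝ) : ℝ :=
  Real.sqrt (-κ) *
    ∫ θ in (0 : ℝ)..1,
      ξ / Real.sqrt (1 - ((1 - lam * κ / 2 * ξ ^ 2 * (1 - θ ^ 2))⁻¹) ^ 2)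


lemma deriv_left_nonneg {u : ℝ → ℝ} {a b : ℝ} (hab : a < b)
    (hdiff : DifferentiableAt ℝ u a) (ha : u a = 0)
    (hpos : ∀ x ∈ Ioo a b, 0 < u x) : 0 ≤ deriv u a := by
  have hslope : Tendsto (slope u a) (𝓝[≠] a) (𝓝 (deriv u a)) :=
    hasDerivAt_iff_tendsto_slope.1 hdiff.hasDerivAt
  have hle : 𝓝[Ioo a b] a ≤ 𝓝[≠] a :=
    nhdsWithin_mono a (fun x hx => ne_of_gt hx.1)
  have hne : (𝓝[Ioo a b] a).NeBot := left_nhdsWithin_Ioo_neBot hab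
  refine ge_of_tendsto (hslope.mono_left hle) ?_
  filter_upwards [self_mem_nhdsWithin] with x hx
  have : 0 < u x := hpos x hx
  have hxa : 0 < x - a := sub_pos.2 hx.1
  rw [slope_def_field, ha, sub_zero]
  positivity

lemma deriv_right_nonpos {u : ℝ → ℝ} {a b : ℝ} (hab : a < b)
    (hdiff : DifferentiableAt ℝ u b) (hb : u b = 0)
    (hpos : ∀ x ∈ Ioo a b, 0 < u x) : deriv u b ≤ 0 := by
  have hslope : Tendsto (slope u b) (𝓝[≠] b) (𝓝 (deriv u b)) :=
    hasDerivAt_iff_tendsto_slope.1 hdiff.hasDerivAt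
  have hle : 𝓝[Ioo a b] b ≤ 𝓝[≠] b :=
    nhdsWithin_mono b (fun x hx => ne_of_lt hx.2)
  have hne : (𝓝[Ioo a b] b).NeBot := right_nhdsWithin_Ioo_neBot hab
  refine le_of_tendsto (hslope.mono_left hle) ?_
  filter_upwards [self_mem_nhdsWithin] with x hx
  have h1 : 0 < u x := hpos x hx
  have hxb : x - b < 0 := sub_neg.2 hx.2
  rw [slope_def_field, hb, sub_zero]
  exact le_of_lt (div_neg_of_pos_of_neg h1 hxb)

lemma gap_lemma {κ lam : ℝ} (hκ : κ < 0) (hlam : 0 < lam) {u : ℝ → ℝ}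
    (hd1 : ∀ x ∈ Icc (0:ℝ) 1, DifferentiableAt ℝ u x)
    (hd2 : ∀ x ∈ Icc (0:ℝ) 1, DifferentiableAt ℝ (deriv u) x)
    (hQ : ∀ x ∈ Icc (0:ℝ) 1, 0 < 1 + κ * (deriv u x) ^ 2)
    (hODE : ∀ x ∈ Icc (0:ℝ) 1,
      -(deriv (deriv u) x) = lam * u x * (1 + κ * (deriv u x) ^ 2) ^ ((3:ℝ)/2))
    {a b : ℝ} (ha0 : 0 ≤ a) (hab : a < b) (hb1 : b ≤ 1)
    (hua : u a = 0) (hub : u b = 0) (hpos : ∀ x ∈ Ioo a b, 0 < u x)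
    (hua' : deriv u a ≠ 0) (hub' : deriv u b ≠ 0) :
    Real.pi / Real.sqrt lam < b - a := by
  set ω := Real.sqrt lam with hωdef
  have hω : 0 < ω := Real.sqrt_pos.2 hlam
  have hω2 : ω * ω = lam := Real.mul_self_sqrt hlam.le
  have hmema : a ∈ Icc (0:ℝ) 1 := ⟨ha0, hab.le.trans hb1⟩
  have hmemb : b ∈ Icc (0:ℝ) 1 := ⟨ha0.trans hab.le, hb1⟩
  have hsubI : Icc a b ⊆ Icc (0:ℝ) 1 := Icc_subset_Icc ha0 hb1
  by_contra hcon
  push_neg at hcon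
  have hba_le : ω * (b - a) ≤ π := by
    rw [le_div_iff₀ hω] at hcon; nlinarith
  have hda : 0 < deriv u a :=
    lt_of_le_of_ne (deriv_left_nonneg hab (hd1 a hmema) hua hpos) (Ne.symm hua')
  have hdb : deriv u b < 0 :=
    lt_of_le_of_ne (deriv_right_nonpos hab (hd1 b hmemb) hub hpos) hub'
  have hvpos : ∀ x ∈ Ioo a b, 0 < Real.sin (ω * (x - a)) := by
    intro x hx
    refine Real.sin_pos_of_pos_of_lt_pi (by nlinarith [hx.1]) ?_
    calc ω * (x - a) < ω * (b - a) := by nlinarith [hx.2]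
      _ ≤ π := hba_le
  set W : ℝ → ℝ := fun x =>
    u x * (ω * Real.cos (ω * (x - a))) - deriv u x * Real.sin (ω * (x - a)) with hWdef
  have hW : ∀ x ∈ Icc (0:ℝ) 1, HasDerivAt W
      (lam * u x * Real.sin (ω * (x - a)) *
        ((1 + κ * (deriv u x) ^ 2) ^ ((3:ℝ)/2) - 1)) x := by
    intro x hx
    have hgx : HasDerivAt (fun y : ℝ => ω * (y - a)) ω x := by
      simpa using ((hasDerivAt_id x).sub_const a).const_mul ω
    have hsin : HasDerivAt (fun y => Real.sin (ω * (y - a)))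
        (Real.cos (ω * (x - a)) * ω) x := (Real.hasDerivAt_sin _).comp x hgx
    have hcos : HasDerivAt (fun y => Real.cos (ω * (y - a)))
        (-Real.sin (ω * (x - a)) * ω) x := (Real.hasDerivAt_cos _).comp x hgx
    have hu := (hd1 x hx).hasDerivAt
    have hu' := (hd2 x hx).hasDerivAt
    have h1 : HasDerivAt (fun y => u y * (ω * Real.cos (ω * (y - a))))
        (deriv u x * (ω * Real.cos (ω * (x - a))) +
          u x * (ω * (-Real.sin (ω * (x - a)) * ω))) x := hu.mul (hcos.const_mul ω)
    have h2 : HasDerivAt (fun y => deriv u y * Real.sin (ω * (y - a)))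
        (deriv (deriv u) x * Real.sin (ω * (x - a)) +
          deriv u x * (Real.cos (ω * (x - a)) * ω)) x := hu'.mul hsin
    have h3 := h1.sub h2
    refine h3.congr_deriv (Eq.symm ?_)
    have hode := hODE x hx
    linear_combination (-(Real.sin (ω * (x - a)))) * hode +
      (u x * Real.sin (ω * (x - a))) * hω2
  have hWdiff : ∀ x ∈ Icc (0:ℝ) 1, DifferentiableAt ℝ W x :=
    fun x hx => (hW x hx).differentiableAt
  have hWderiv : ∀ x ∈ Icc (0:ℝ) 1, deriv W x =
      lam * u x * Real.sin (ω * (x - a)) *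
        ((1 + κ * (deriv u x) ^ 2) ^ ((3:ℝ)/2) - 1) :=
    fun x hx => (hW x hx).deriv
  have hWa : W a = 0 := by simp [hWdef, hua]
  -- a small interval (a,c) where deriv u > 0
  have hev : ∀ᶠ x in 𝓝 a, 0 < deriv u x :=
    ((hd2 a hmema).continuousAt).eventually (eventually_gt_nhds hda)
  obtain ⟨ε, hε, hball⟩ := Metric.eventually_nhds_iff.1 hev
  set c := min (a + ε / 2) ((a + b) / 2) with hcdef
  have hac : a < c := lt_min (by linarith) (by linarith)
  have hcb : c < b := lt_of_le_of_lt (min_le_right _ _) (by linarith)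
  have hdc : ∀ x ∈ Icc a c, 0 < deriv u x := by
    intro x hx
    apply hball
    rw [Real.dist_eq, abs_of_nonneg (by linarith [hx.1])]
    have : c ≤ a + ε / 2 := min_le_left _ _
    linarith [hx.2]
  have hsub1 : Icc a c ⊆ Icc (0:ℝ) 1 := Icc_subset_Icc ha0 (by linarith)
  have hsub2 : Icc c b ⊆ Icc (0:ℝ) 1 := Icc_subset_Icc (by linarith) hb1
  have hanti1 : StrictAntiOn W (Icc a c) := by
    refine strictAntiOn_of_deriv_neg (convex_Icc a c)
      (fun x hx => ((hWdiff x (hsub1 hx)).continuousAt.continuousWithinAt)) ?_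
    intro x hx
    rw [interior_Icc] at hx
    rw [hWderiv x (hsub1 (Ioo_subset_Icc_self hx))]
    have hux : 0 < u x := hpos x ⟨hx.1, hx.2.trans hcb⟩
    have hsx : 0 < Real.sin (ω * (x - a)) := hvpos x ⟨hx.1, hx.2.trans hcb⟩
    have hdx : 0 < deriv u x := hdc x (Ioo_subset_Icc_self hx)
    have hQx := hQ x (hsub1 (Ioo_subset_Icc_self hx))
    have hlt1 : 1 + κ * (deriv u x) ^ 2 < 1 := by nlinarith [pow_pos hdx 2]
    have hrp : (1 + κ * (deriv u x) ^ 2) ^ ((3:ℝ)/2) < 1 :=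
      Real.rpow_lt_one hQx.le hlt1 (by norm_num)
    have : 0 < lam * u x * Real.sin (ω * (x - a)) := by positivity
    nlinarith
  have hanti2 : AntitoneOn W (Icc c b) := by
    refine antitoneOn_of_deriv_nonpos (convex_Icc c b)
      (fun x hx => ((hWdiff x (hsub2 hx)).continuousAt.continuousWithinAt)) ?_ ?_
    · intro x hx
      rw [interior_Icc] at hx
      exact (hWdiff x (hsub2 (Ioo_subset_Icc_self hx))).differentiableWithinAt
    · intro x hx
      rw [interior_Icc] at hx
      rw [hWderiv x (hsub2 (Ioo_subset_Icc_self hx))]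
      have hux : 0 < u x := hpos x ⟨hac.trans hx.1, hx.2⟩
      have hsx : 0 < Real.sin (ω * (x - a)) := hvpos x ⟨hac.trans hx.1, hx.2⟩
      have hQx := hQ x (hsub2 (Ioo_subset_Icc_self hx))
      have hle1 : 1 + κ * (deriv u x) ^ 2 ≤ 1 := by nlinarith [sq_nonneg (deriv u x)]
      have hrp : (1 + κ * (deriv u x) ^ 2) ^ ((3:ℝ)/2) ≤ 1 :=
        Real.rpow_le_one hQx.le hle1 (by norm_num)
      have : 0 < lam * u x * Real.sin (ω * (x - a)) := by positivity
      nlinarith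
  have h1 : W c < W a := hanti1 (left_mem_Icc.2 hac.le) (right_mem_Icc.2 hac.le) hac
  have h2 : W b ≤ W c := hanti2 (left_mem_Icc.2 hcb.le) (right_mem_Icc.2 hcb.le) hcb.le
  have hWb : 0 ≤ W b := by
    have hsb : 0 ≤ Real.sin (ω * (b - a)) :=
      Real.sin_nonneg_of_nonneg_of_le_pi (by nlinarith) hba_le
    have : W b = -(deriv u b) * Real.sin (ω * (b - a)) := by
      simp only [hWdef]; rw [hub]; ring
    rw [this]
    exact mul_nonneg (by linarith) hsb
  linarith

lemma sign_const {u : ℝ → ℝ} {a b : ℝ} (hcont : ContinuousOn u (Icc a b))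
    (hne : ∀ x ∈ Ioo a b, u x ≠ 0) {x y : ℝ} (hx : x ∈ Ioo a b) (hy : y ∈ Ioo a b)
    (hxpos : 0 < u x) : 0 < u y := by
  by_contra hcon
  push_neg at hcon
  have hyneg : u y < 0 := lt_of_le_of_ne hcon (hne y hy)
  rcases le_total x y with hxy | hxy
  · have hsub : Icc x y ⊆ Icc a b := Icc_subset_Icc hx.1.le hy.2.le
    obtain ⟨z, hz, hz0⟩ := intermediate_value_Ioo' hxy (hcont.mono hsub)
      (show (0:ℝ) ∈ Ioo (u y) (u x) from ⟨hyneg, hxpos⟩)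
    exact hne z ⟨hx.1.trans hz.1, hz.2.trans hy.2⟩ hz0
  · have hsub : Icc y x ⊆ Icc a b := Icc_subset_Icc hy.1.le hx.2.le
    obtain ⟨z, hz, hz0⟩ := intermediate_value_Ioo hxy (hcont.mono hsub)
      (show (0:ℝ) ∈ Ioo (u y) (u x) from ⟨hyneg, hxpos⟩)
    exact hne z ⟨hy.1.trans hz.1, hz.2.trans hx.2⟩ hz0

lemma gap_lemma' {κ lam : ℝ} (hκ : κ < 0) (hlam : 0 < lam) {u : ℝ → ℝ}
    (hd1 : ∀ x ∈ Icc (0:ℝ) 1, DifferentiableAt ℝ u x)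
    (hd2 : ∀ x ∈ Icc (0:ℝ) 1, DifferentiableAt ℝ (deriv u) x)
    (hQ : ∀ x ∈ Icc (0:ℝ) 1, 0 < 1 + κ * (deriv u x) ^ 2)
    (hODE : ∀ x ∈ Icc (0:ℝ) 1,
      -(deriv (deriv u) x) = lam * u x * (1 + κ * (deriv u x) ^ 2) ^ ((3:ℝ)/2))
    {a b : ℝ} (ha0 : 0 ≤ a) (hab : a < b) (hb1 : b ≤ 1)
    (hua : u a = 0) (hub : u b = 0) (hne : ∀ x ∈ Ioo a b, u x ≠ 0)
    (hua' : deriv u a ≠ 0) (hub' : deriv u b ≠ 0) :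
    Real.pi / Real.sqrt lam < b - a := by
  have hsubI : Icc a b ⊆ Icc (0:ℝ) 1 := Icc_subset_Icc ha0 hb1
  have hcont : ContinuousOn u (Icc a b) :=
    fun x hx => (hd1 x (hsubI hx)).continuousAt.continuousWithinAt
  have hm : (a + b) / 2 ∈ Ioo a b := ⟨by linarith, by linarith⟩
  rcases lt_or_ge 0 (u ((a + b) / 2)) with hmp | hmn
  · exact gap_lemma hκ hlam hd1 hd2 hQ hODE ha0 hab hb1 hua hub
      (fun x hx => sign_const hcont hne hm hx hmp) hua' hub'
  · have hmneg : 0 < -u ((a + b) / 2) := by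
      rcases lt_or_eq_of_le hmn with h | h
      · linarith
      · exact absurd h (hne _ hm)
    have hderivg : deriv (fun x => -u x) = fun x => -deriv u x :=
      funext fun x => deriv.neg
    have hd1g : ∀ x ∈ Icc (0:ℝ) 1, DifferentiableAt ℝ (fun x => -u x) x :=
      fun x hx => (hd1 x hx).neg
    have hd2g : ∀ x ∈ Icc (0:ℝ) 1, DifferentiableAt ℝ (deriv (fun x => -u x)) x := by
      rw [hderivg]; exact fun x hx => (hd2 x hx).neg
    have hQg : ∀ x ∈ Icc (0:ℝ) 1, 0 < 1 + κ * (deriv (fun x => -u x) x) ^ 2 := by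
      rw [hderivg]; intro x hx; simpa using hQ x hx
    have hODEg : ∀ x ∈ Icc (0:ℝ) 1,
        -(deriv (deriv (fun x => -u x)) x) =
          lam * (-u x) * (1 + κ * (deriv (fun x => -u x) x) ^ 2) ^ ((3:ℝ)/2) := by
      rw [hderivg]
      intro x hx
      have h2 : deriv (fun x => -deriv u x) x = -(deriv (deriv u) x) := deriv.neg
      rw [h2]
      simp only [neg_neg, neg_sq]
      linear_combination -(hODE x hx)
    have hcontg : ContinuousOn (fun x => -u x) (Icc a b) := hcont.neg
    have hgap := gap_lemma hκ hlam hd1g hd2g hQg hODEg ha0 hab hb1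
      (by simpa using hua) (by simpa using hub)
      (fun x hx => sign_const hcontg (fun y hy h => hne y hy (by simpa using h)) hm hx hmneg)
      (by rw [hderivg]; simpa using hua') (by rw [hderivg]; simpa using hub')
    simpa using hgap

lemma zeros_finite {u : ℝ → ℝ}
    (hd1 : ∀ x ∈ Icc (0:ℝ) 1, DifferentiableAt ℝ u x)
    (hsimple : ∀ τ ∈ Icc (0:ℝ) 1, u τ = 0 → deriv u τ ≠ 0) :
    {x : ℝ | x ∈ Icc (0:ℝ) 1 ∧ u x = 0}.Finite := by
  set Z := {x : ℝ | x ∈ Icc (0:ℝ) 1 ∧ u x = 0} with hZdef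
  by_contra hinf
  rw [← Set.Infinite] at hinf
  obtain ⟨x₀, hx₀K, hacc⟩ := hinf.exists_accPt_of_subset_isCompact isCompact_Icc
    (fun x hx => hx.1)
  have hneb : (𝓝[Z \ {x₀}] x₀).NeBot := by
    rw [accPt_principal_iff_clusterPt] at hacc
    exact hacc
  have h1 : Tendsto u (𝓝[Z \ {x₀}] x₀) (𝓝 (u x₀)) :=
    ((hd1 x₀ hx₀K).continuousAt).tendsto.mono_left nhdsWithin_le_nhds
  have h2 : Tendsto u (𝓝[Z \ {x₀}] x₀) (𝓝 0) := by
    apply Tendsto.congr' _ tendsto_const_nhds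
    filter_upwards [self_mem_nhdsWithin] with z hz
    exact hz.1.2.symm
  have hu0 : u x₀ = 0 := tendsto_nhds_unique h1 h2
  have hs : Tendsto (slope u x₀) (𝓝[≠] x₀) (𝓝 (deriv u x₀)) :=
    hasDerivAt_iff_tendsto_slope.1 (hd1 x₀ hx₀K).hasDerivAt
  have hle : 𝓝[Z \ {x₀}] x₀ ≤ 𝓝[≠] x₀ := nhdsWithin_mono _ (fun z hz => hz.2)
  have h3 : Tendsto (slope u x₀) (𝓝[Z \ {x₀}] x₀) (𝓝 (deriv u x₀)) := hs.mono_left hle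
  have h4 : Tendsto (slope u x₀) (𝓝[Z \ {x₀}] x₀) (𝓝 0) := by
    apply Tendsto.congr' _ tendsto_const_nhds
    filter_upwards [self_mem_nhdsWithin] with z hz
    rw [slope_def_field, hz.1.2, hu0, sub_zero, zero_div]
  exact hsimple x₀ hx₀K hu0 (tendsto_nhds_unique h3 h4)

theorem stmt10' (κ lam : ℝ) (hκ : κ < 0) (hlam : 0 < lam) (n : ℕ) (hn : 1 ≤ n)
    (u : ℝ → ℝ)
    (hd1 : ∀ x ∈ Set.Icc (0:ℝ) 1, DifferentiableAt ℝ u x)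
    (hd2 : ∀ x ∈ Set.Icc (0:ℝ) 1, DifferentiableAt ℝ (deriv u) x)
    (hQ : ∀ x ∈ Set.Icc (0:ℝ) 1, 0 < 1 + κ * (deriv u x) ^ 2)
    (hODE : ∀ x ∈ Set.Icc (0:ℝ) 1,
      -(deriv (deriv u) x) = lam * u x * (1 + κ * (deriv u x) ^ 2) ^ ((3:ℝ)/2))
    (hu0 : u 0 = 0) (hu1 : u 1 = 0)
    (hncard : {x ∈ Set.Ioo (0:ℝ) 1 | u x = 0}.ncard = n - 1)
    (hsimple : ∀ τ ∈ Set.Icc (0:ℝ) 1, u τ = 0 → deriv u τ ≠ 0) :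
    (n : ℝ) ^ 2 * Real.pi ^ 2 < lam := by
  set Z := {x : ℝ | x ∈ Icc (0:ℝ) 1 ∧ u x = 0} with hZdef
  have hZfin : Z.Finite := zeros_finite hd1 hsimple
  have h0Z : (0:ℝ) ∈ Z := ⟨⟨le_refl 0, zero_le_one⟩, hu0⟩
  have h1Z : (1:ℝ) ∈ Z := ⟨⟨zero_le_one, le_refl 1⟩, hu1⟩
  have hZifin : {x ∈ Set.Ioo (0:ℝ) 1 | u x = 0}.Finite :=
    hZfin.subset (fun x hx => ⟨⟨hx.1.1.le, hx.1.2.le⟩, hx.2⟩)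
  have hZeq : Z = insert 0 (insert 1 {x ∈ Set.Ioo (0:ℝ) 1 | u x = 0}) := by
    ext x
    simp only [hZdef, Set.mem_setOf_eq, Set.mem_insert_iff, Set.mem_Icc, Set.mem_Ioo,
      Set.mem_sep_iff]
    constructor
    · rintro ⟨⟨h0, h1⟩, hx⟩
      rcases eq_or_lt_of_le h0 with h | h
      · exact Or.inl h.symm
      rcases eq_or_lt_of_le h1 with h' | h'
      · exact Or.inr (Or.inl h')
      · exact Or.inr (Or.inr ⟨⟨h, h'⟩, hx⟩)
    · rintro (rfl | rfl | ⟨⟨h0, h1⟩, hx⟩)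
      · exact ⟨⟨le_refl _, zero_le_one⟩, hu0⟩
      · exact ⟨⟨zero_le_one, le_refl _⟩, hu1⟩
      · exact ⟨⟨h0.le, h1.le⟩, hx⟩
  have h1ni : (1:ℝ) ∉ {x ∈ Set.Ioo (0:ℝ) 1 | u x = 0} := fun h => lt_irrefl _ h.1.2
  have h0ni : (0:ℝ) ∉ insert 1 {x ∈ Set.Ioo (0:ℝ) 1 | u x = 0} := by
    rintro (h | h)
    · exact one_ne_zero h.symm
    · exact lt_irrefl _ h.1.1
  have hcardZ : Z.ncard = n + 1 := by
    rw [hZeq, Set.ncard_insert_of_notMem h0ni (hZifin.insert 1),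
      Set.ncard_insert_of_notMem h1ni hZifin, hncard]
    omega
  set s := hZfin.toFinset with hsdef
  have hcard : s.card = n + 1 := by
    rw [hsdef, ← Set.ncard_eq_toFinset_card Z hZfin]; exact hcardZ
  set e := s.orderIsoOfFin hcard with hedef
  set fIdx : ℕ → Fin (n+1) := fun i => ⟨min i n, Nat.lt_succ_of_le (min_le_right i n)⟩
    with hfIdxdef
  set f : ℕ → ℝ := fun i => (e (fIdx i) : ℝ) with hfdef
  have hfZ : ∀ i, f i ∈ Z := fun i => hZfin.mem_toFinset.1 (e (fIdx i)).2
  have hfmono : ∀ i j : ℕ, i < j → j ≤ n → f i < f j := by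
    intro i j hij hjn
    have h : fIdx i < fIdx j := by
      rw [hfIdxdef, Fin.mk_lt_mk]
      omega
    exact Subtype.coe_lt_coe.2 (e.strictMono h)
  have hfmono' : ∀ i j : ℕ, i ≤ j → j ≤ n → f i ≤ f j := by
    intro i j hij hjn
    rcases eq_or_lt_of_le hij with rfl | h
    · exact le_refl _
    · exact (hfmono i j h hjn).le
  have hmemZ : ∀ z ∈ Z, ∃ i : ℕ, i ≤ n ∧ f i = z := by
    intro z hz
    obtain ⟨j, hj⟩ := e.surjective ⟨z, hZfin.mem_toFinset.2 hz⟩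
    have hjn : (j : ℕ) ≤ n := Nat.lt_succ_iff.1 j.isLt
    refine ⟨j.val, hjn, ?_⟩
    have hjv : fIdx j.val = j := by
      rw [hfIdxdef]
      exact Fin.ext (by simp [min_eq_left hjn])
    rw [hfdef]
    simp only [hjv, hj]
  have hf0 : f 0 = 0 := by
    obtain ⟨i, hin, hfi⟩ := hmemZ 0 h0Z
    have h1 : f 0 ≤ f i := hfmono' 0 i (Nat.zero_le i) hin
    rw [hfi] at h1
    exact le_antisymm h1 (hfZ 0).1.1
  have hfn : f n = 1 := by
    obtain ⟨i, hin, hfi⟩ := hmemZ 1 h1Z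
    have h1 : f i ≤ f n := hfmono' i n hin (le_refl n)
    rw [hfi] at h1
    exact le_antisymm (hfZ n).1.2 h1
  have hgap : ∀ i ∈ Finset.range n, Real.pi / Real.sqrt lam < f (i+1) - f i := by
    intro i hi
    rw [Finset.mem_range] at hi
    have hZa := hfZ i
    have hZb := hfZ (i+1)
    have hab : f i < f (i+1) := hfmono i (i+1) (Nat.lt_succ_self i) (by omega)
    refine gap_lemma' hκ hlam hd1 hd2 hQ hODE hZa.1.1 hab hZb.1.2 hZa.2 hZb.2 ?_
      (hsimple _ hZa.1 hZa.2) (hsimple _ hZb.1 hZb.2)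
    intro x hx hux
    have hxZ : x ∈ Z := ⟨⟨hZa.1.1.trans hx.1.le, hx.2.le.trans hZb.1.2⟩, hux⟩
    obtain ⟨j, hjn, hj⟩ := hmemZ x hxZ
    have hij : i < j := by
      by_contra hcon
      push_neg at hcon
      have := hfmono' j i hcon (by omega)
      rw [hj] at this
      linarith [hx.1]
    have hji : j < i + 1 := by
      by_contra hcon
      push_neg at hcon
      have := hfmono' (i+1) j hcon hjn
      rw [hj] at this
      linarith [hx.2]
    omega
  have hsum : ∑ i ∈ Finset.range n, (f (i+1) - f i) = 1 := by
    rw [Finset.sum_range_sub f n, hfn, hf0]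
    ring
  have hlt : (n:ℝ) * (Real.pi / Real.sqrt lam) < 1 := by
    calc (n:ℝ) * (Real.pi / Real.sqrt lam)
        = ∑ _i ∈ Finset.range n, (Real.pi / Real.sqrt lam) := by
          rw [Finset.sum_const, Finset.card_range, nsmul_eq_mul]
      _ < ∑ i ∈ Finset.range n, (f (i+1) - f i) :=
          Finset.sum_lt_sum_of_nonempty (Finset.nonempty_range_iff.2 (by omega)) hgap
      _ = 1 := hsum
  have hω : 0 < Real.sqrt lam := Real.sqrt_pos.2 hlam
  have hπ := Real.pi_pos
  have hn1 : (1:ℝ) ≤ (n:ℝ) := by exact_mod_cast hn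
  rw [← mul_div_assoc] at hlt
  have hnπ : (n:ℝ) * Real.pi < Real.sqrt lam := (div_lt_one hω).1 hlt
  have hsq : Real.sqrt lam ^ 2 = lam := Real.sq_sqrt hlam.le
  have hpos : 0 < (n:ℝ) * Real.pi := by positivity
  nlinarith [hnπ, hpos, hsq]

theorem stmt10 (κ lam : ℝ) (hκ : κ < 0) (hlam : 0 < lam) (n : ℕ) (hn : 1 ≤ n)
    (u : ℝ → ℝ) (hu : SPlus κ lam n u) :
    (n : ℝ) ^ 2 * Real.pi ^ 2 < lam := by
  obtain ⟨⟨⟨hd1, hd2, -, hQ, hODE⟩, hu0, hu1⟩, -, hncard, hsimple, -⟩ := hu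
  exact stmt10' κ lam hκ hlam n hn u hd1 hd2 hQ hODE hu0 hu1 hncard hsimple
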